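/- Let k be a field of characteristic zero and let A be a finite-dimensional central simple k-algebra (a simple ring whose center is k·1_A). Then the k-linear span of all commutators ab − ba (for a, b ∈ A) equals the kernel of the k-linear map sending u ∈ A to the trace of the k-linear endomorphism of A given by left multiplication by u. -/

import Mathlib

/-- For a finite-dimensional central simple algebra `A` over a field `k` of characteristic
zero, the `k`-linear span of all commutators `a * b - b * a` coincides with the kernel of
the `k`-linear map sending `u : A` to the trace of left multiplication by `u` on `A`. -/
theorem span_commutators_eq_ker_trace_mulLeft
    (k : Type) [Field k] [CharZero k]
    (A : Type) [Ring A] [Algebra k A] [FiniteDimensional k A]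
    [IsSimpleRing A] [Algebra.IsCentral k A] :
    Submodule.span k {x : A | ∃ a b : A, x = a * b - b * a} =
      LinearMap.ker ((LinearMap.trace k A) ∘ₗ (LinearMap.mul k A)) := by
  set f : A →ₗ[k] k := (LinearMap.trace k A) ∘ₗ (LinearMap.mul k A) with hf
  have hfapp : ∀ x : A, f x = LinearMap.trace k A (LinearMap.mul k A x) := fun _ => rfl
  -- cyclicity
  have hmul : ∀ x y : A, (LinearMap.mul k A) (x * y)
      = (LinearMap.mul k A x) * (LinearMap.mul k A y) := by
    intro x y
    exact map_mul (Algebra.lmul k A) x y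
  have hcyc : ∀ x y : A, f (x * y) = f (y * x) := by
    intro x y
    rw [hfapp, hfapp, hmul, hmul, LinearMap.trace_mul_comm]
  have hone : f 1 = (Module.finrank k A : k) := by
    have h1 : (LinearMap.mul k A) (1 : A) = LinearMap.id := by
      ext y; simp
    rw [hfapp, h1, LinearMap.trace_id]
  have hnA : (0 : A) ≠ 1 := zero_ne_one
  have hfin : 0 < Module.finrank k A := Module.finrank_pos
  have hone' : f 1 ≠ 0 := by
    rw [hone]
    exact_mod_cast hfin.ne'
  -- radical ideal
  have hrad : ∀ x : A, (∀ y : A, f (x * y) = 0) → x = 0 := by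
    intro x hx
    let S : Set A := {x : A | ∀ y : A, f (x * y) = 0}
    let I : TwoSidedIdeal A := TwoSidedIdeal.mk' S
      (by intro y; simp)
      (by intro a b ha hb y; rw [add_mul, map_add, ha y, hb y, add_zero])
      (by intro a ha y; rw [neg_mul, map_neg, ha y, neg_zero])
      (by intro a b hb y; rw [mul_assoc, hcyc, mul_assoc]; exact hb (y * a))
      (by intro a b ha y; rw [mul_assoc]; exact ha (b * y))
    rcases (IsSimpleRing.simple (R := A)).eq_bot_or_eq_top I with hI | hI
    · have : x ∈ I := (TwoSidedIdeal.mem_mk' _ _ _ _ _ _ x).2 hx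
      rwa [hI, TwoSidedIdeal.mem_bot] at this
    · have h1 : (1 : A) ∈ I := by rw [hI]; trivial
      have := (TwoSidedIdeal.mem_mk' _ _ _ _ _ _ (1 : A)).1 h1 1
      rw [one_mul] at this
      exact absurd this hone'
  -- bilinear form
  set B : LinearMap.BilinForm k A := (LinearMap.mul k A).compr₂ f with hB
  have hBapp : ∀ x y : A, B x y = f (x * y) := fun _ _ => rfl
  have hsymm : B.IsSymm := by
    refine ⟨fun x y => ?_⟩
    simp only [hBapp, RingHom.id_apply]
    exact hcyc x y
  have hrefl : B.IsRefl := hsymm.isRefl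
  have hnd : B.Nondegenerate := by
    refine ⟨fun x hx => ?_, fun x hx => (hrad x fun y => (hcyc x y).trans (hx y))⟩
    exact hrad x fun y => hx y
  set C : Submodule k A := Submodule.span k {x : A | ∃ a b : A, x = a * b - b * a} with hC
  -- C ≤ ker f
  have hCK : C ≤ LinearMap.ker f := by
    rw [hC, Submodule.span_le]
    rintro x ⟨a, b, rfl⟩
    simp only [SetLike.mem_coe, LinearMap.mem_ker, map_sub]
    rw [hcyc a b, sub_self]
  -- orthogonal of C inside span of 1
  have horth : B.orthogonal C ≤ Submodule.span k {(1 : A)} := by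
    intro x hx
    have hcomm : ∀ a : A, x * a - a * x = 0 := by
      intro a
      apply hrad
      intro y
      have hmem : a * y - y * a ∈ C := Submodule.subset_span ⟨a, y, rfl⟩
      have := hx _ hmem
      rw [hBapp] at this
      calc f ((x * a - a * x) * y)
          = f (x * (a * y)) - f (a * (x * y)) := by
            rw [show (x * a - a * x) * y = x * (a * y) - a * (x * y) by noncomm_ring,
              map_sub]
      _ = f (x * (a * y)) - f (x * (y * a)) := by rw [hcyc a (x * y), mul_assoc]
      _ = f (x * (a * y - y * a)) := by rw [mul_sub, map_sub]
      _ = f ((a * y - y * a) * x) := hcyc _ _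
      _ = 0 := this
    have hcent : x ∈ Subalgebra.center k A := by
      rw [Subalgebra.mem_center_iff]
      intro a
      exact (sub_eq_zero.mp (hcomm a)).symm
    have hbot : x ∈ (⊥ : Subalgebra k A) := Algebra.IsCentral.out hcent
    rw [Algebra.mem_bot] at hbot
    obtain ⟨r, rfl⟩ := hbot
    rw [Algebra.algebraMap_eq_smul_one]
    exact Submodule.smul_mem _ _ (Submodule.mem_span_singleton_self _)
  have hdim_orth : Module.finrank k (B.orthogonal C) ≤ 1 := by
    calc Module.finrank k (B.orthogonal C)
        ≤ Module.finrank k (Submodule.span k {(1 : A)}) := Submodule.finrank_mono horth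
      _ ≤ 1 := le_of_eq (finrank_span_singleton one_ne_zero)
  have htop : B.orthogonal ⊤ = ⊥ := LinearMap.BilinForm.orthogonal_top_eq_bot hnd
  have hadd := LinearMap.BilinForm.finrank_add_finrank_orthogonal (B := B) hrefl C
  rw [htop, inf_bot_eq, finrank_bot, add_zero] at hadd
  have hker_lt : Module.finrank k (LinearMap.ker f) < Module.finrank k A := by
    apply Submodule.finrank_lt
    intro h
    have : (1 : A) ∈ LinearMap.ker f := h ▸ Submodule.mem_top
    exact hone' (LinearMap.mem_ker.1 this)
  have hle : Module.finrank k (LinearMap.ker f) ≤ Module.finrank k C := by omega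
  exact Submodule.eq_of_le_of_finrank_le hCK hle
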